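/- Let F be a field, (a,b) ≠ (0,0) and (c,d) ≠ (0,0) in F², and set c₁ = (a,b,0,0), c₂ = (0,0,c,d) (the rows of a reduced cache matrix), and let t = (t₁,t₂,t₃,t₄) ∈ F⁴. If the cache recovers file A from t (i.e., e₀, e₁ ∈ span{c₁, c₂, t}), then the 2×2 matrix with rows (a,b) and (t₁,t₂) is invertible and (t₃,t₄) is a scalar multiple of (c,d). If the cache recovers file B from t (i.e., e₂, e₃ ∈ span{c₁, c₂, t}), then the 2×2 matrix with rows (c,d) and (t₃,t₄) is invertible and (t₁,t₂) is a scalar multiple of (a,b). -/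

import Mathlib

/-- Coordinates of `F⁴` correspond to the subfiles `A₀, A₁, B₀, B₁`.  A user with
cache rows `c1, c2` recovers file `A` from transmission `t` iff `e₀` and `e₁`
lie in the span of `{c1, c2, t}`. -/
def recoversA {F : Type*} [Field F] (c1 c2 t : Fin 4 → F) : Prop :=
  (Pi.single 0 1 : Fin 4 → F) ∈ Submodule.span F {c1, c2, t} ∧
  (Pi.single 1 1 : Fin 4 → F) ∈ Submodule.span F {c1, c2, t}

/-- A user with cache rows `c1, c2` recovers file `B` from transmission `t` iff
`e₂` and `e₃` lie in the span of `{c1, c2, t}`. -/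
def recoversB {F : Type*} [Field F] (c1 c2 t : Fin 4 → F) : Prop :=
  (Pi.single 2 1 : Fin 4 → F) ∈ Submodule.span F {c1, c2, t} ∧
  (Pi.single 3 1 : Fin 4 → F) ∈ Submodule.span F {c1, c2, t}

lemma mem_span_triple {F V : Type*} [Field F] [AddCommGroup V] [Module F V]
    {c1 c2 t v : V} (h : v ∈ Submodule.span F {c1, c2, t}) :
    ∃ x y z : F, v = x • c1 + (y • c2 + z • t) := by
  rw [show ({c1, c2, t} : Set V) = insert c1 (insert c2 {t}) from rfl,
    Submodule.mem_span_insert] at h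
  obtain ⟨x, w, hw, rfl⟩ := h
  rw [Submodule.mem_span_insert] at hw
  obtain ⟨y, u, hu, rfl⟩ := hw
  rw [Submodule.mem_span_singleton] at hu
  obtain ⟨z, rfl⟩ := hu
  exact ⟨x, y, z, rfl⟩

lemma key2 {F : Type*} [Field F] {a b u v x y x' y' : F}
    (h1 : 1 = x * a + y * u) (h2 : 0 = x * b + y * v)
    (h3 : 0 = x' * a + y' * u) (h4 : 1 = x' * b + y' * v) :
    IsUnit (!![a, b; u, v] : Matrix (Fin 2) (Fin 2) F) ∧ x * y' - y * x' ≠ 0 := by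
  have hBA : (!![x, y; x', y'] : Matrix (Fin 2) (Fin 2) F) * !![a, b; u, v] = 1 := by
    ext i j
    fin_cases i <;> fin_cases j <;>
      simp [Matrix.mul_apply, Fin.sum_univ_two] <;>
      first
        | linear_combination -h1
        | linear_combination -h2
        | linear_combination -h3
        | linear_combination -h4
  refine ⟨IsUnit.of_mul_eq_one_right _ hBA, ?_⟩
  have hB : IsUnit (!![x, y; x', y'] : Matrix (Fin 2) (Fin 2) F) :=
    IsUnit.of_mul_eq_one_right _ (mul_eq_one_comm.mp hBA)
  rw [Matrix.isUnit_iff_isUnit_det, Matrix.det_fin_two_of, isUnit_iff_ne_zero] at hB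
  exact hB

lemma keymu {F : Type*} [Field F] {c d w y p q : F} (hy : y ≠ 0)
    (h3 : 0 = w * c + y * p) (h4 : 0 = w * d + y * q) :
    ∃ μ : F, p = μ * c ∧ q = μ * d := by
  refine ⟨-w / y, ?_, ?_⟩ <;> field_simp <;>
    [linear_combination -h3; linear_combination -h4]

/-- Constraints due to recovery for a reduced cache matrix with rows
`c₁ = (a,b,0,0)` and `c₂ = (0,0,c,d)` (with `(a,b) ≠ (0,0) ≠ (c,d)`): if the
cache recovers file `A` from `t`, then the 2×2 matrix with rows `(a,b)` and
`(t₁,t₂)` is invertible and `(t₃,t₄)` is a scalar multiple of `(c,d)`; if the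
cache recovers file `B` from `t`, then the 2×2 matrix with rows `(c,d)` and
`(t₃,t₄)` is invertible and `(t₁,t₂)` is a scalar multiple of `(a,b)`. -/
theorem recovery_constraints (F : Type*) [Field F] (a b c d : F)
    (hab : (a, b) ≠ (0, 0)) (hcd : (c, d) ≠ (0, 0)) (t : Fin 4 → F) :
    (recoversA ![a, b, 0, 0] ![0, 0, c, d] t →
      IsUnit (!![a, b; t 0, t 1] : Matrix (Fin 2) (Fin 2) F) ∧
      ∃ μ : F, t 2 = μ * c ∧ t 3 = μ * d) ∧
    (recoversB ![a, b, 0, 0] ![0, 0, c, d] t →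
      IsUnit (!![c, d; t 2, t 3] : Matrix (Fin 2) (Fin 2) F) ∧
      ∃ μ : F, t 0 = μ * a ∧ t 1 = μ * b) := by
  constructor
  · rintro ⟨h0, h1⟩
    obtain ⟨x, y, z, hx⟩ := mem_span_triple h0
    obtain ⟨x', y', z', hx'⟩ := mem_span_triple h1
    have e0 := congrFun hx 0
    have e1 := congrFun hx 1
    have e2 := congrFun hx 2
    have e3 := congrFun hx 3
    have f0 := congrFun hx' 0
    have f1 := congrFun hx' 1
    have f2 := congrFun hx' 2
    have f3 := congrFun hx' 3
    simp [Pi.single_apply, Matrix.vecHead, Matrix.vecTail, Fin.succ] at e0 e1 e2 e3 f0 f1 f2 f3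
    obtain ⟨hU, hdet⟩ := key2 e0 e1 f0 f1
    refine ⟨hU, ?_⟩
    by_cases hz : z = 0
    · have hz' : z' ≠ 0 := by
        intro hz'; apply hdet; rw [hz, hz']; ring
      exact keymu hz' f2 f3
    · exact keymu hz e2 e3
  · rintro ⟨h0, h1⟩
    obtain ⟨x, y, z, hx⟩ := mem_span_triple h0
    obtain ⟨x', y', z', hx'⟩ := mem_span_triple h1
    have e0 := congrFun hx 0
    have e1 := congrFun hx 1
    have e2 := congrFun hx 2
    have e3 := congrFun hx 3
    have f0 := congrFun hx' 0
    have f1 := congrFun hx' 1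
    have f2 := congrFun hx' 2
    have f3 := congrFun hx' 3
    simp [Pi.single_apply, Matrix.vecHead, Matrix.vecTail, Fin.succ] at e0 e1 e2 e3 f0 f1 f2 f3
    obtain ⟨hU, hdet⟩ := key2 e2 e3 f2 f3
    refine ⟨hU, ?_⟩
    by_cases hz : z = 0
    · have hz' : z' ≠ 0 := by
        intro hz'; apply hdet; rw [hz, hz']; ring
      exact keymu hz' f0 f1
    · exact keymu hz e0 e1
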